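/- Let H be a separable complex Hilbert space, let p ≥ 1, and let x, y : Fin p × ℤ → H form a pair of dual Riesz bases for H. Let M be a p×p complex matrix with det M ≠ 0, and define z_{(j,n)} = ∑_{k=0}^{p−1} M_{j,k} x_{(k,n)} and w_{(j,n)} = ∑_{k=0}^{p−1} conj((M⁻¹)_{k,j}) y_{(k,n)} for j ∈ Fin p, n ∈ ℤ. Then z is a Riesz basis for H, and z and w form a pair of dual Riesz bases; in particular, for every f ∈ H the family ((j,n) ↦ ⟨f, w_{(j,n)}⟩ z_{(j,n)}) has sum f (unconditional convergence in H). -/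

import Mathlib

noncomputable section
open scoped Classical

local notation "⟪" f ", " g "⟫" => @inner ℂ _ _ g f

/-- A family `x : ι → H` is a Riesz basis for `H` if it is the image of a Hilbert
(orthonormal) basis of `H` under a continuous linear equivalence of `H`. -/
def IsRieszBasis {H : Type*} [NormedAddCommGroup H] [InnerProductSpace ℂ H]
    {ι : Type*} (x : ι → H) : Prop :=
  ∃ (e : HilbertBasis ι ℂ H) (T : H ≃L[ℂ] H), ∀ i, x i = T (e i)

/-- Families `x, y : ι → H` form a pair of dual Riesz bases: both are Riesz bases,
they are biorthogonal, and `∑ᵢ ⟨f, yᵢ⟩ xᵢ = f` for every `f` (inner product linear in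
the first argument, conjugate-linear in the second). -/
def IsDualRieszBasisPair {H : Type*} [NormedAddCommGroup H] [InnerProductSpace ℂ H]
    {ι : Type*} (x y : ι → H) : Prop :=
  IsRieszBasis x ∧ IsRieszBasis y ∧
    (∀ i j, ⟪x i, y j⟫ = if i = j then (1 : ℂ) else 0) ∧
    ∀ f : H, HasSum (fun i => ⟪f, y i⟫ • x i) f

namespace RieszAux

variable {H : Type*} [NormedAddCommGroup H] [InnerProductSpace ℂ H] [CompleteSpace H]
variable {p : ℕ}

/-- The isometry `ℓ²(ℤ) → H` sending `lp.single n c` to `c • e (j, n)`. -/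
def rowIso (e : HilbertBasis (Fin p × ℤ) ℂ H) (j : Fin p) :
    lp (fun _ : ℤ => ℂ) 2 →ₗᵢ[ℂ] H :=
  (Orthonormal.orthogonalFamily
    (e.orthonormal.comp (fun n => (j, n)) (fun a b h => (Prod.ext_iff.mp h).2))).linearIsometry

lemma rowIso_single (e : HilbertBasis (Fin p × ℤ) ℂ H) (j : Fin p) (n : ℤ) (c : ℂ) :
    rowIso e j (lp.single 2 n c) = c • e (j, n) := by
  rw [rowIso, OrthogonalFamily.linearIsometry_apply_single,
    LinearIsometry.toSpanSingleton_apply]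
  rfl

/-- The row isometry as a continuous linear map. -/
def rowCLM (e : HilbertBasis (Fin p × ℤ) ℂ H) (j : Fin p) :
    lp (fun _ : ℤ => ℂ) 2 →L[ℂ] H :=
  (rowIso e j).toContinuousLinearMap

lemma rowCLM_single (e : HilbertBasis (Fin p × ℤ) ℂ H) (j : Fin p) (n : ℤ) (c : ℂ) :
    rowCLM e j (lp.single 2 n c) = c • e (j, n) :=
  rowIso_single e j n c

lemma rowAdj_coord (e : HilbertBasis (Fin p × ℤ) ℂ H) (j : Fin p) (u : H) (m : ℤ) :
    (ContinuousLinearMap.adjoint (rowCLM e j) u) m = inner ℂ (e (j, m)) u := by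
  have h1 : (ContinuousLinearMap.adjoint (rowCLM e j) u) m
      = inner ℂ (lp.single (E := fun _ : ℤ => ℂ) 2 m (1 : ℂ))
          (ContinuousLinearMap.adjoint (rowCLM e j) u) := by
    rw [lp.inner_single_left]
    simp
  rw [h1, ContinuousLinearMap.adjoint_inner_right, rowCLM_single, one_smul]

lemma rowAdj (e : HilbertBasis (Fin p × ℤ) ℂ H) (j j' : Fin p) (n : ℤ) :
    ContinuousLinearMap.adjoint (rowCLM e j) (e (j', n))
      = if j' = j then lp.single 2 n (1 : ℂ) else 0 := by
  apply lp.ext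
  funext m
  rw [rowAdj_coord]
  have horth := orthonormal_iff_ite.mp e.orthonormal (j, m) (j', n)
  rw [horth]
  by_cases hj : j' = j
  · subst hj
    rw [if_pos rfl]
    by_cases hm : m = n
    · subst hm
      rw [if_pos rfl, lp.single_apply_self]
    · rw [lp.single_apply_ne 2 n _ hm, if_neg (by simp [Prod.ext_iff, hm])]
  · rw [if_neg hj, if_neg (fun h => hj ((Prod.ext_iff.mp h).1).symm)]
    rfl

lemma denseSpan (e : HilbertBasis (Fin p × ℤ) ℂ H) :
    Dense ((Submodule.span ℂ (Set.range ⇑e) : Submodule ℂ H) : Set H) := by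
  rw [dense_iff_closure_eq, ← Submodule.topologicalClosure_coe, e.dense_span,
    Submodule.top_coe]

/-- The block-diagonal operator acting by the matrix `N` on each "column" of the basis. -/
def matOp (e : HilbertBasis (Fin p × ℤ) ℂ H) (N : Matrix (Fin p) (Fin p) ℂ) : H →L[ℂ] H :=
  ∑ j, ∑ k, N j k • ((rowCLM e k).comp (ContinuousLinearMap.adjoint (rowCLM e j)))

lemma matOp_apply (e : HilbertBasis (Fin p × ℤ) ℂ H) (N : Matrix (Fin p) (Fin p) ℂ)
    (j : Fin p) (n : ℤ) :
    matOp e N (e (j, n)) = ∑ k, N j k • e (k, n) := by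
  rw [matOp]
  simp only [ContinuousLinearMap.sum_apply, ContinuousLinearMap.smul_apply,
    ContinuousLinearMap.comp_apply, rowAdj]
  rw [Finset.sum_comm]
  refine Finset.sum_congr rfl fun k _ => ?_
  rw [Finset.sum_eq_single j]
  · simp [rowCLM_single]
  · intro b _ hb
    have hnb : ¬ (j = b) := fun h => hb h.symm
    rw [if_neg hnb]
    simp
  · simp

lemma inner_matOp (e : HilbertBasis (Fin p × ℤ) ℂ H) (N : Matrix (Fin p) (Fin p) ℂ)
    (j : Fin p) (n : ℤ) (u : H) :
    (inner ℂ (e (j, n)) (matOp e N u) : ℂ) = ∑ k, N k j * inner ℂ (e (k, n)) u := by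
  rw [matOp]
  simp only [ContinuousLinearMap.sum_apply, ContinuousLinearMap.smul_apply,
    ContinuousLinearMap.comp_apply, inner_sum, inner_smul_right]
  refine Finset.sum_congr rfl fun j' _ => ?_
  have hterm : ∀ k, (inner ℂ (e (j, n)) (rowCLM e k
      (ContinuousLinearMap.adjoint (rowCLM e j') u)) : ℂ)
      = if j = k then inner ℂ (e (j', n)) u else 0 := by
    intro k
    rw [← ContinuousLinearMap.adjoint_inner_left, rowAdj]
    by_cases hk : j = k
    · rw [if_pos hk, if_pos hk, lp.inner_single_left, rowAdj_coord]
      simp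
    · rw [if_neg hk, if_neg hk, inner_zero_left]
  simp only [hterm]
  rw [Finset.sum_eq_single j]
  · simp
  · intro b _ hb
    have hnb : ¬ (j = b) := fun h => hb h.symm
    rw [if_neg hnb, mul_zero]
  · simp

lemma matOp_comp_apply (e : HilbertBasis (Fin p × ℤ) ℂ H) (N N' : Matrix (Fin p) (Fin p) ℂ)
    (v : H) : matOp e N (matOp e N' v) = matOp e (N' * N) v := by
  have : (matOp e N).comp (matOp e N') = matOp e (N' * N) := by
    refine ContinuousLinearMap.ext_on (denseSpan e) ?_
    rintro _ ⟨⟨j, n⟩, rfl⟩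
    simp only [ContinuousLinearMap.comp_apply, matOp_apply, map_sum, map_smul]
    simp only [matOp_apply, Finset.smul_sum, smul_smul]
    rw [Finset.sum_comm]
    refine Finset.sum_congr rfl fun m _ => ?_
    rw [Matrix.mul_apply, Finset.sum_smul]
  exact DFunLike.congr_fun this v

lemma matOp_one_apply (e : HilbertBasis (Fin p × ℤ) ℂ H) (v : H) :
    matOp e (1 : Matrix (Fin p) (Fin p) ℂ) v = v := by
  have : matOp e (1 : Matrix (Fin p) (Fin p) ℂ) = ContinuousLinearMap.id ℂ H := by
    refine ContinuousLinearMap.ext_on (denseSpan e) ?_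
    rintro _ ⟨⟨j, n⟩, rfl⟩
    rw [matOp_apply]
    rw [Finset.sum_eq_single j]
    · simp [Matrix.one_apply]
    · intro b _ hb
      have hnb : ¬ (j = b) := fun h => hb h.symm
      simp [Matrix.one_apply, hnb]
    · simp
  rw [this]; rfl

/-- `matOp e M` as a continuous linear equivalence, for invertible `M`. -/
def matEquiv (e : HilbertBasis (Fin p × ℤ) ℂ H) (M : Matrix (Fin p) (Fin p) ℂ)
    (hM : M.det ≠ 0) : H ≃L[ℂ] H :=
  ContinuousLinearEquiv.equivOfInverse (matOp e M) (matOp e M⁻¹)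
    (fun v => by
      rw [matOp_comp_apply, Matrix.mul_nonsing_inv M (isUnit_iff_ne_zero.mpr hM),
        matOp_one_apply])
    (fun v => by
      rw [matOp_comp_apply, Matrix.nonsing_inv_mul M (isUnit_iff_ne_zero.mpr hM),
        matOp_one_apply])

@[simp] lemma matEquiv_apply (e : HilbertBasis (Fin p × ℤ) ℂ H) (M : Matrix (Fin p) (Fin p) ℂ)
    (hM : M.det ≠ 0) (v : H) : matEquiv e M hM v = matOp e M v := rfl

@[simp] lemma matEquiv_symm_apply (e : HilbertBasis (Fin p × ℤ) ℂ H)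
    (M : Matrix (Fin p) (Fin p) ℂ) (hM : M.det ≠ 0) (v : H) :
    (matEquiv e M hM).symm v = matOp e M⁻¹ v := rfl

end RieszAux

open RieszAux in
theorem stmt0 {H : Type*} [NormedAddCommGroup H] [InnerProductSpace ℂ H]
    [CompleteSpace H] [TopologicalSpace.SeparableSpace H]
    {p : ℕ} (hp : 1 ≤ p) (x y : Fin p × ℤ → H)
    (hxy : IsDualRieszBasisPair x y)
    (M : Matrix (Fin p) (Fin p) ℂ) (hM : M.det ≠ 0)
    (z w : Fin p × ℤ → H)
    (hz : ∀ j n, z (j, n) = ∑ k, M j k • x (k, n))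
    (hw : ∀ j n, w (j, n) = ∑ k, (starRingEnd ℂ) (M⁻¹ k j) • y (k, n)) :
    IsRieszBasis z ∧ IsDualRieszBasisPair z w := by
  obtain ⟨⟨e, T, hT⟩, -, hb, hsum⟩ := hxy
  -- the adjoint of `T.symm`
  set Tia : H →L[ℂ] H := ContinuousLinearMap.adjoint (T.symm : H →L[ℂ] H) with hTia
  have hTinv : ∀ v, ContinuousLinearMap.adjoint (T : H →L[ℂ] H) (Tia v) = v := by
    intro v
    have hcomp : ((T.symm : H →L[ℂ] H).comp (T : H →L[ℂ] H)) = ContinuousLinearMap.id ℂ H := by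
      ext u; simp
    have := congrArg ContinuousLinearMap.adjoint hcomp
    rw [ContinuousLinearMap.adjoint_comp, ContinuousLinearMap.adjoint_id] at this
    exact DFunLike.congr_fun this v
  have hTinv' : ∀ v, Tia (ContinuousLinearMap.adjoint (T : H →L[ℂ] H) v) = v := by
    intro v
    have hcomp : ((T : H →L[ℂ] H).comp (T.symm : H →L[ℂ] H)) = ContinuousLinearMap.id ℂ H := by
      ext u; simp
    have := congrArg ContinuousLinearMap.adjoint hcomp
    rw [ContinuousLinearMap.adjoint_comp, ContinuousLinearMap.adjoint_id] at this
    exact DFunLike.congr_fun this v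
  -- density of the span of the range of x
  have hdx : Dense ((Submodule.span ℂ (Set.range x) : Submodule ℂ H) : Set H) := by
    intro f
    have hs : HasSum (fun i => e.repr (T.symm f) i • x i) f := by
      have h0 := (e.hasSum_repr (T.symm f)).mapL (T : H →L[ℂ] H)
      simp only [map_smul, ContinuousLinearEquiv.coe_coe] at h0
      rw [T.apply_symm_apply] at h0
      have hfun : (fun i => e.repr (T.symm f) i • x i)
          = fun i => e.repr (T.symm f) i • T (e i) := by
        funext i; rw [hT i]
      rw [hfun]
      exact h0
    refine mem_closure_of_tendsto hs (Filter.Eventually.of_forall ?_)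
    intro s
    exact Submodule.sum_mem _ fun i _ =>
      Submodule.smul_mem _ _ (Submodule.subset_span ⟨i, rfl⟩)
  -- the dual family is forced: y i = Tia (e i)
  have hy : ∀ i, y i = Tia (e i) := by
    intro i
    have key2 : ∀ v ∈ Submodule.span ℂ (Set.range x),
        (inner ℂ (y i) v : ℂ) = inner ℂ (Tia (e i)) v := by
      intro v hv
      refine Submodule.span_induction ?_ ?_ ?_ ?_ hv
      · rintro _ ⟨i', rfl⟩
        rw [hb i' i, hTia, ContinuousLinearMap.adjoint_inner_left, hT i']
        have h2 : (T.symm : H →L[ℂ] H) (T (e i')) = e i' := by simp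
        rw [h2, orthonormal_iff_ite.mp e.orthonormal i i']
        by_cases h : i' = i
        · subst h; simp
        · rw [if_neg h, if_neg (fun h' => h h'.symm)]
      · simp
      · intro a b _ _ ha hb'; rw [inner_add_right, inner_add_right, ha, hb']
      · intro c a _ ha; rw [inner_smul_right, inner_smul_right, ha]
    exact Dense.eq_of_inner_left ℂ hdx fun v hv => key2 v hv
  -- matrix for w
  set Nw : Matrix (Fin p) (Fin p) ℂ := Matrix.conjTranspose M⁻¹ with hNwdef
  have hNw : Nw.det ≠ 0 := by
    rw [hNwdef, Matrix.det_conjTranspose]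
    have : IsUnit (M⁻¹).det := Matrix.isUnit_nonsing_inv_det M (isUnit_iff_ne_zero.mpr hM)
    simpa [isUnit_iff_ne_zero] using (star_ne_zero.mpr (isUnit_iff_ne_zero.mp this))
  -- the equivalences
  set R : H ≃L[ℂ] H := (matEquiv e M hM).trans T with hRdef
  have hz' : ∀ i, z i = R (e i) := by
    rintro ⟨j, n⟩
    rw [hz, hRdef]
    simp only [ContinuousLinearEquiv.trans_apply, matEquiv_apply, matOp_apply, map_sum, map_smul]
    refine Finset.sum_congr rfl fun k _ => ?_
    rw [hT]
  -- Tia as a continuous linear equivalence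
  set TiaEq : H ≃L[ℂ] H :=
    ContinuousLinearEquiv.equivOfInverse Tia (ContinuousLinearMap.adjoint (T : H →L[ℂ] H))
      hTinv hTinv' with hTiaEq
  set Rw : H ≃L[ℂ] H := (matEquiv e Nw hNw).trans TiaEq with hRwdef
  have hw' : ∀ i, w i = Rw (e i) := by
    rintro ⟨j, n⟩
    rw [hw, hRwdef]
    simp only [ContinuousLinearEquiv.trans_apply, matEquiv_apply, matOp_apply]
    have : TiaEq = Tia := rfl
    rw [map_sum]
    refine Finset.sum_congr rfl fun k _ => ?_
    rw [map_smul, hy (k, n)]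
    rw [hNwdef, Matrix.conjTranspose_apply]
    rfl
  refine ⟨⟨e, R, hz'⟩, ⟨e, R, hz'⟩, ⟨e, Rw, hw'⟩, ?_, ?_⟩
  · -- biorthogonality
    rintro ⟨j, n⟩ ⟨j', n'⟩
    show (inner ℂ (w (j', n')) (z (j, n)) : ℂ) = _
    rw [hw, hz, sum_inner]
    have hterm : ∀ k, (inner ℂ ((starRingEnd ℂ) (M⁻¹ k j') • y (k, n')) (∑ m, M j m • x (m, n)) : ℂ)
        = M⁻¹ k j' * ∑ m, M j m * (if (m, n) = (k, n') then 1 else 0) := by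
      intro k
      rw [inner_smul_left, inner_sum]
      simp only [inner_smul_right, Complex.conj_conj]
      congr 1
      refine Finset.sum_congr rfl fun m _ => ?_
      congr 1
      rw [hb (m, n) (k, n')]
      by_cases h : (m, n) = (k, n') <;> simp [h]
    simp only [hterm]
    by_cases hn : n = n'
    · subst hn
      have hsum1 : ∀ k : Fin p, (∑ m, M j m * (if ((m : Fin p), n) = (k, n) then (1 : ℂ) else 0))
          = M j k := by
        intro k
        rw [Finset.sum_eq_single k]
        · simp
        · intro b _ hb'
          rw [if_neg (by simp [Prod.ext_iff, hb']), mul_zero]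
        · simp
      simp only [hsum1]
      have : (∑ k, M⁻¹ k j' * M j k) = (M * M⁻¹) j j' := by
        rw [Matrix.mul_apply]
        exact Finset.sum_congr rfl fun k _ => mul_comm _ _
      rw [this, Matrix.mul_nonsing_inv M (isUnit_iff_ne_zero.mpr hM), Matrix.one_apply]
      by_cases hj : j = j' <;> simp [hj, Prod.ext_iff]
    · have : ∀ k : Fin p, ∀ m : Fin p, ((m, n) = (k, n')) = False := by
        intro k m; simp [Prod.ext_iff, hn]
      simp only [this, if_false, mul_zero, Finset.sum_const_zero]
  · -- the expansion
    intro f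
    set g : H := R.symm f with hg
    have key : ∀ i, (inner ℂ (w i) f : ℂ) = inner ℂ (e i) g := by
      rintro ⟨j, n⟩
      have hgeq : g = matOp e M⁻¹ ((T.symm : H →L[ℂ] H) f) := by
        rw [hg, hRdef, ContinuousLinearEquiv.symm_trans_apply, matEquiv_symm_apply]
        rfl
      rw [hw, sum_inner, hgeq, inner_matOp]
      refine Finset.sum_congr rfl fun k _ => ?_
      rw [inner_smul_left, Complex.conj_conj]
      congr 1
      rw [hy (k, n), hTia, ContinuousLinearMap.adjoint_inner_left]
    have hs := (e.hasSum_repr g).mapL (R : H →L[ℂ] H)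
    have hRg : (R : H →L[ℂ] H) g = f := by
      rw [hg]; exact R.apply_symm_apply f
    rw [hRg] at hs
    convert hs using 2 with i
    rw [map_smul]
    congr 1
    · rw [e.repr_apply_apply, key]
    · rw [hz' i]; rfl
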